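/- There exists a trapezoid P in ℝ² for which no point p makes the four signed triangle areas Vol₂*(C_i(p)) (triangles over the four sides with apex p) all equal. -/

import Mathlib

/-- Twice-signed-area determinant of the pair of planar vectors `u`, `v`. -/
noncomputable def det2 (u v : EuclideanSpace ℝ (Fin 2)) : ℝ :=
  u 0 * v 1 - u 1 * v 0

/-- Signed area of the triangle with base the segment from `a` to `b` and apex `p`
(positive when `p` lies to the left of the oriented segment `a → b`, i.e. on the inner
side for a counterclockwise-oriented polygon). -/
noncomputable def signedArea (a b p : EuclideanSpace ℝ (Fin 2)) : ℝ :=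
  det2 (b - a) (p - a) / 2

/-- **A trapezoid with no equal-area apex point.**
There exists a (counterclockwise oriented, convex, non-parallelogram) trapezoid with
vertices `v 0, v 1, v 2, v 3` for which no point `p` makes the four signed areas of the
triangles over its sides with apex `p` all equal. -/
theorem exists_trapezoid_no_equal_area_point :
    ∃ v : Fin 4 → EuclideanSpace ℝ (Fin 2),
      (∃ t : ℝ, 0 < t ∧ t ≠ 1 ∧ v 2 - v 3 = t • (v 1 - v 0)) ∧
      (∀ i : Fin 4, 0 < signedArea (v i) (v (i + 1)) (v (i + 2))) ∧
      ¬ ∃ p : EuclideanSpace ℝ (Fin 2),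
        signedArea (v 0) (v 1) p = signedArea (v 1) (v 2) p ∧
        signedArea (v 1) (v 2) p = signedArea (v 2) (v 3) p ∧
        signedArea (v 2) (v 3) p = signedArea (v 3) (v 0) p := by
  refine ⟨![!₂[0,0],!₂[12,0],!₂[9,6],!₂[3,6]], ⟨1/2, by norm_num, by norm_num, ?_⟩, ?_, ?_⟩
  · ext i
    fin_cases i <;> simp <;> norm_num
  · intro i
    fin_cases i <;> norm_num [signedArea, det2, Fin.add_def, Matrix.cons_val_two, Matrix.vecHead, Matrix.vecTail]
  · rintro ⟨p, h1, h2, h3⟩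
    simp only [signedArea, det2, Pi.sub_apply] at h1 h2 h3
    have e3 : (![!₂[0,0],!₂[12,0],!₂[9,6],!₂[3,6]] : Fin 4 → EuclideanSpace ℝ (Fin 2)) 3 = !₂[3,6] := rfl
    norm_num [Matrix.cons_val_two, Matrix.vecHead, Matrix.vecTail, e3] at h1 h2 h3
    linarith
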